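/- In the Milnor-Witt K-theory $K^{MW}_*(F)$ of a field $F$, define $n_\epsilon = \sum_{i=1}^{n} \langle (-1)^{i-1} \rangle$ for $n \geq 1$, where $\langle a \rangle = 1 + \eta[a]$. Then for every unit $a \in F^\times$ and every integer $n \geq 1$, $[a^n] = n_\epsilon [a]$ in $K^{MW}_1(F)$. -/

import Mathlib

/-! Milnor–Witt K-theory of a field `F`, presented (following Morel) as the ring generated by
symbols `[a]` for `a ∈ Fˣ` together with an element `η`, subject to the relations
(1) `[a][1-a] = 0` for `a ≠ 0, 1` (Steinberg relation);
(2) `[ab] = [a] + [b] + η[a][b]`;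
(3) `η[a] = [a]η`;
(4) `η(η[-1] + 2) = 0`.
We realize it as a quotient of the free (noncommutative) `ℤ`-algebra on the set
`Option Fˣ`, where `some a` corresponds to the symbol `[a]` and `none` to `η`. -/

namespace MWK

variable (F : Type*) [Field F]

/-- Morel's defining relations for Milnor–Witt K-theory. -/
inductive Rel : FreeAlgebra ℤ (Option Fˣ) → FreeAlgebra ℤ (Option Fˣ) → Prop
  | steinberg (a : Fˣ) (h : (a : F) ≠ 1) :
      Rel (FreeAlgebra.ι ℤ (Option.some a) *
        FreeAlgebra.ι ℤ (Option.some (Units.mk0 ((1 : F) - a) (sub_ne_zero.mpr (Ne.symm h))))) 0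
  | mul (a b : Fˣ) :
      Rel (FreeAlgebra.ι ℤ (Option.some (a * b)))
        (FreeAlgebra.ι ℤ (Option.some a) + FreeAlgebra.ι ℤ (Option.some b) +
          FreeAlgebra.ι ℤ (Option.none : Option Fˣ) * FreeAlgebra.ι ℤ (Option.some a) *
            FreeAlgebra.ι ℤ (Option.some b))
  | etaComm (a : Fˣ) :
      Rel (FreeAlgebra.ι ℤ (Option.none : Option Fˣ) * FreeAlgebra.ι ℤ (Option.some a))
        (FreeAlgebra.ι ℤ (Option.some a) * FreeAlgebra.ι ℤ (Option.none : Option Fˣ))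
  | hyperbolic :
      Rel (FreeAlgebra.ι ℤ (Option.none : Option Fˣ) *
        (FreeAlgebra.ι ℤ (Option.none : Option Fˣ) * FreeAlgebra.ι ℤ (Option.some (-1 : Fˣ)) + 2))
        0

/-- Milnor–Witt K-theory of the field `F`, presented by Morel's generators and relations. -/
abbrev MW := RingQuot (Rel F)

/-- The Milnor–Witt symbol `[a]`, for a unit `a` of `F`. -/
def symbol (a : Fˣ) : MW F :=
  RingQuot.mkRingHom (Rel F) (FreeAlgebra.ι ℤ (Option.some a))

/-- The Hopf element `η` of Milnor–Witt K-theory. -/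
def eta : MW F :=
  RingQuot.mkRingHom (Rel F) (FreeAlgebra.ι ℤ (Option.none : Option Fˣ))

variable {F}

lemma symbol_mul (a b : Fˣ) :
    symbol F (a * b) = symbol F a + symbol F b + eta F * symbol F a * symbol F b := by
  have h := RingQuot.mkRingHom_rel (Rel.mul a b)
  simpa only [symbol, eta, map_add, map_mul] using h

lemma eta_symbol_comm (a : Fˣ) : eta F * symbol F a = symbol F a * eta F := by
  have h := RingQuot.mkRingHom_rel (Rel.etaComm a)
  simpa only [symbol, eta, map_mul] using h

lemma hyp : eta F * (eta F * symbol F (-1) + 2) = 0 := by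
  have h := RingQuot.mkRingHom_rel (Rel.hyperbolic (F := F))
  simpa only [symbol, eta, map_mul, map_add, map_ofNat, map_zero] using h

lemma steinberg (a : Fˣ) (h : (a : F) ≠ 1) :
    symbol F a * symbol F (Units.mk0 ((1 : F) - a) (sub_ne_zero.mpr (Ne.symm h))) = 0 := by
  have h2 := RingQuot.mkRingHom_rel (Rel.steinberg a h)
  simpa only [symbol, map_mul, map_zero] using h2

lemma steinberg' (a b : Fˣ) (h : (a : F) ≠ 1) (hb : (b : F) = 1 - a) :
    symbol F a * symbol F b = 0 := by
  have hb' : b = Units.mk0 ((1 : F) - a) (sub_ne_zero.mpr (Ne.symm h)) := Units.ext (by simp [hb])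
  rw [hb']; exact steinberg a h

lemma comm (a b : Fˣ) :
    eta F * (symbol F a * symbol F b) = eta F * (symbol F b * symbol F a) := by
  have h1 := symbol_mul a b
  have h2 := symbol_mul b a
  rw [mul_comm a b] at h1
  linear_combination (norm := noncomm_ring) h2 - h1

lemma eta_one : eta F * symbol F 1 = 0 := by
  have h2 := symbol_mul (-1 : Fˣ) (-1)
  rw [show ((-1 : Fˣ) * (-1)) = 1 by simp] at h2
  linear_combination (norm := noncomm_ring) eta F * h2 + hyp (F := F) * symbol F (-1)

lemma symbol_one : symbol F 1 = 0 := by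
  have h2 := symbol_mul (1 : Fˣ) 1
  rw [one_mul] at h2
  linear_combination (norm := noncomm_ring) -h2 - eta_one (F := F) * symbol F 1

lemma inv_rel (x : Fˣ) :
    symbol F x + symbol F x⁻¹ + eta F * symbol F x * symbol F x⁻¹ = 0 := by
  have h := symbol_mul x x⁻¹
  rw [show x * x⁻¹ = 1 by group, symbol_one] at h
  linear_combination (norm := noncomm_ring) -h

lemma form_mul (a b : Fˣ) :
    (1 + eta F * symbol F a) * (1 + eta F * symbol F b) = 1 + eta F * symbol F (a * b) := by
  rw [symbol_mul a b]
  linear_combination (norm := noncomm_ring) -(eta F * eta_symbol_comm a * symbol F b)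

lemma mul_neg_self (a : Fˣ) : symbol F a * symbol F (-a) = 0 := by
  by_cases h : (a : F) = 1
  · have ha : a = 1 := Units.ext (by simpa using h)
    rw [ha, symbol_one, zero_mul]
  · have ha1 : a ≠ 1 := fun hh => h (by rw [hh]; rfl)
    have hinv : ((a⁻¹ : Fˣ) : F) ≠ 1 := by
      intro hh
      exact ha1 (inv_eq_one.mp (Units.ext (by simpa using hh)))
    set u : Fˣ := Units.mk0 ((1 : F) - a) (sub_ne_zero.mpr (Ne.symm h)) with hu
    set v : Fˣ := Units.mk0 ((1 : F) - ((a⁻¹ : Fˣ) : F)) (sub_ne_zero.mpr (Ne.symm hinv)) with hv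
    have st1 : symbol F a * symbol F u = 0 := steinberg' a u h rfl
    have st2 : symbol F a⁻¹ * symbol F v = 0 := steinberg' a⁻¹ v hinv rfl
    have hinvv := inv_rel (F := F) v
    have step2 : symbol F a⁻¹ * symbol F v⁻¹ = 0 := by
      linear_combination (norm := noncomm_ring) symbol F a⁻¹ * hinvv - st2 -
        (eta F * st2 * symbol F v⁻¹) +
        eta_symbol_comm a⁻¹ * (symbol F v * symbol F v⁻¹)
    have hinva := inv_rel (F := F) a⁻¹
    rw [inv_inv] at hinva
    have h4 : (1 + eta F * symbol F a⁻¹) * (symbol F a * symbol F v⁻¹) = 0 := by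
      linear_combination (norm := noncomm_ring) hinva * symbol F v⁻¹ - step2
    have h5 : (1 + eta F * symbol F a) * (1 + eta F * symbol F a⁻¹) = 1 := by
      rw [form_mul, show a * a⁻¹ = 1 by group, symbol_one, mul_zero, add_zero]
    have step3 : symbol F a * symbol F v⁻¹ = 0 := by
      calc symbol F a * symbol F v⁻¹
          = ((1 + eta F * symbol F a) * (1 + eta F * symbol F a⁻¹)) *
              (symbol F a * symbol F v⁻¹) := by rw [h5, one_mul]
        _ = (1 + eta F * symbol F a) *
              ((1 + eta F * symbol F a⁻¹) * (symbol F a * symbol F v⁻¹)) := by rw [mul_assoc]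
        _ = 0 := by rw [h4, mul_zero]
    have hneg : (-a : Fˣ) = u * v⁻¹ := by
      apply Units.ext
      have ha0 : (a : F) ≠ 0 := Units.ne_zero a
      rw [Units.val_mul, Units.val_neg]
      rw [show ((v⁻¹ : Fˣ) : F) = ((v : Fˣ) : F)⁻¹ from Units.val_inv_eq_inv_val v]
      rw [hu, hv]
      simp only [Units.val_mk0]
      have hne : (a : F) - 1 ≠ 0 := sub_ne_zero.mpr h
      field_simp
      linear_combination Units.mul_inv a
    have hdecomp := symbol_mul u v⁻¹
    rw [← hneg] at hdecomp
    rw [hdecomp]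
    linear_combination (norm := noncomm_ring) st1 + step3 + eta F * st1 * symbol F v⁻¹ -
      (eta_symbol_comm a * (symbol F u * symbol F v⁻¹))

lemma eta_sq (a : Fˣ) :
    eta F * (symbol F a * symbol F a) = eta F * (symbol F (-1) * symbol F a) := by
  have h1 := symbol_mul (-1 : Fˣ) (-a)
  rw [show (-1 : Fˣ) * (-a) = a by simp] at h1
  have h2 := mul_neg_self a
  linear_combination (norm := noncomm_ring) eta F * symbol F a * h1 + comm a (-1) -
    (eta F * h2) - (eta F * eta_symbol_comm a * (symbol F (-1) * symbol F (-a))) +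
    eta F * comm a (-1) * symbol F (-a) + hyp (F := F) * (symbol F a * symbol F (-a))

lemma eta_form_pow (i : ℕ) :
    eta F * (1 + eta F * symbol F ((-1 : Fˣ) ^ i)) = if Even i then eta F else -eta F := by
  rcases Nat.even_or_odd i with he | ho
  · rw [he.neg_one_pow, if_pos he]
    linear_combination (norm := noncomm_ring) eta F * eta_one (F := F)
  · rw [ho.neg_one_pow, if_neg (Nat.not_even_iff_odd.mpr ho)]
    linear_combination (norm := noncomm_ring) hyp (F := F)

lemma eta_sum (n : ℕ) :
    eta F * (∑ i ∈ Finset.range n, (1 + eta F * symbol F ((-1 : Fˣ) ^ i))) =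
      if Even n then 0 else eta F := by
  induction n with
  | zero => simp
  | succ n ih =>
    rw [Finset.sum_range_succ, mul_add, ih, eta_form_pow]
    rcases Nat.even_or_odd n with he | ho
    · rw [if_pos he, if_pos he, if_neg (by simp [Nat.even_add_one, he]), zero_add]
    · have hne : ¬ Even n := Nat.not_even_iff_odd.mpr ho
      rw [if_neg hne, if_neg hne, if_pos (by simp [Nat.even_add_one, hne])]
      simp

lemma key (a : Fˣ) (n : ℕ) :
    eta F * ((∑ i ∈ Finset.range n, (1 + eta F * symbol F ((-1 : Fˣ) ^ i))) *
      (symbol F a * symbol F a)) = eta F * symbol F ((-1 : Fˣ) ^ n) * symbol F a := by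
  rw [← mul_assoc, eta_sum]
  rcases Nat.even_or_odd n with he | ho
  · rw [if_pos he, he.neg_one_pow, zero_mul, eta_one, zero_mul]
  · rw [if_neg (Nat.not_even_iff_odd.mpr ho), ho.neg_one_pow]
    linear_combination (norm := noncomm_ring) eta_sq a

end MWK

/-- In Milnor–Witt K-theory, with `⟨a⟩ = 1 + η[a]` and
`n_ε = ∑_{i=1}^n ⟨(-1)^(i-1)⟩`, one has `[aⁿ] = n_ε [a]` for every unit `a ∈ Fˣ` and every
integer `n ≥ 1`. -/
theorem stmt_7 (F : Type*) [Field F] (a : Fˣ) (n : ℕ) (hn : 1 ≤ n) :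
    MWK.symbol F (a ^ n) =
      (∑ i ∈ Finset.range n, (1 + MWK.eta F * MWK.symbol F ((-1 : Fˣ) ^ i))) *
        MWK.symbol F a := by
  induction n with
  | zero => exact absurd hn (by omega)
  | succ n ih =>
    by_cases h0 : n = 0
    · subst h0
      rw [pow_one, Finset.sum_range_one, pow_zero]
      linear_combination (norm := noncomm_ring) -(MWK.eta_one (F := F) * MWK.symbol F a)
    · have hn1 : 1 ≤ n := Nat.one_le_iff_ne_zero.mpr h0
      have IH := ih hn1
      rw [pow_succ, MWK.symbol_mul, IH, Finset.sum_range_succ]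
      linear_combination (norm := noncomm_ring) MWK.key a n
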